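/- Let μ be a probability measure on a measurable space S, let R: S → ℝ be measurable and bounded with essential infimum R_min under μ, and let c ∈ (0,1). Then the infimum of ∫ W·R dμ over all measurable W: S → [0,∞) with ∫ W dμ = 1 and ∫ |W − 1|/2 dμ ≤ c equals c·R_min + (1−c)·sup_{β ∈ ℝ} { β − (1/(1−c))·∫ max(0, β − R(s)) dμ(s) }. -/

import Mathlib

open MeasureTheory

lemma integrable_of_bdd {S : Type*} [MeasurableSpace S] {μ : Measure S} [IsFiniteMeasure μ]
    {f : S → ℝ} (hf : AEStronglyMeasurable f μ) (C : ℝ) (h : ∀ s, |f s| ≤ C) :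
    Integrable f μ :=
  (integrable_const C).mono' hf (ae_of_all _ (by simpa [Real.norm_eq_abs] using h))

lemma integrable_mul_bdd {S : Type*} [MeasurableSpace S] {μ : Measure S}
    {f g : S → ℝ} (hf : Integrable f μ) (hg : AEStronglyMeasurable g μ) (C : ℝ)
    (hgC : ∀ s, |g s| ≤ C) : Integrable (fun s => f s * g s) μ := by
  refine (hf.abs.const_mul C).mono' (hf.aestronglyMeasurable.mul hg) (ae_of_all _ fun s => ?_)
  simp only [Real.norm_eq_abs, abs_mul]
  calc |f s| * |g s| ≤ |f s| * C := mul_le_mul_of_nonneg_left (hgC s) (abs_nonneg _)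
    _ = C * |f s| := mul_comm _ _

lemma exists_quantile {S : Type*} [MeasurableSpace S] (μ : Measure S) [IsProbabilityMeasure μ]
    (R : S → ℝ) (hR : Measurable R) (Rmax : ℝ) (hbd : ∀ s, |R s| ≤ Rmax)
    (c : ℝ) (hc0 : 0 < c) (hc1 : c < 1) :
    ∃ β : ℝ, (μ {s | β < R s}).toReal ≤ c ∧ c ≤ (μ {s | β ≤ R s}).toReal := by
  set A : Set ℝ := {x : ℝ | (μ {s | x < R s}).toReal ≤ c} with hA
  have hub : ∀ s, R s ≤ Rmax := fun s => (abs_le.mp (hbd s)).2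
  have hlb : ∀ s, -Rmax ≤ R s := fun s => (abs_le.mp (hbd s)).1
  have hA1 : Rmax ∈ A := by
    have : {s | Rmax < R s} = (∅ : Set S) := by
      ext s; simp only [Set.mem_setOf_eq, Set.mem_empty_iff_false, iff_false, not_lt]
      exact hub s
    simp [hA, this, hc0.le]
  have hA2 : BddBelow A := by
    refine ⟨-Rmax, fun y hy => ?_⟩
    by_contra hcon
    push_neg at hcon
    have : {s | y < R s} = (Set.univ : Set S) := by
      ext s; simp only [Set.mem_setOf_eq, Set.mem_univ, iff_true]
      exact lt_of_lt_of_le hcon (hlb s)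
    rw [hA, Set.mem_setOf_eq, this] at hy
    simp [measure_univ] at hy
    linarith
  set β := sInf A with hβ
  have hne : A.Nonempty := ⟨Rmax, hA1⟩
  have key : ∀ x ∈ A, μ {s | x < R s} ≤ ENNReal.ofReal c := by
    intro x hx
    exact (ENNReal.le_ofReal_iff_toReal_le (measure_ne_top μ _) hc0.le).mpr hx
  refine ⟨β, ?_, ?_⟩
  · -- claim 1
    have hset : {s | β < R s} = ⋃ n : ℕ, {s | β + 1/(n+1) < R s} := by
      ext s
      simp only [Set.mem_setOf_eq, Set.mem_iUnion]
      constructor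
      · intro h
        obtain ⟨n, hn⟩ := exists_nat_one_div_lt (sub_pos.mpr h)
        exact ⟨n, by push_cast at hn ⊢; linarith⟩
      · rintro ⟨n, hn⟩
        have : (0:ℝ) < 1/(n+1) := by positivity
        linarith
    have hmono : Monotone (fun n : ℕ => {s | β + 1/(n+1) < R s}) := by
      intro n m hnm s hs
      simp only [Set.mem_setOf_eq] at hs ⊢
      have h1 : (1:ℝ)/(m+1) ≤ 1/(n+1) := by
        apply one_div_le_one_div_of_le (by positivity)
        exact_mod_cast by omega
      linarith
    have hle : ∀ n : ℕ, μ {s | β + 1/(n+1) < R s} ≤ ENNReal.ofReal c := by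
      intro n
      have hpos : β < β + 1/(n+1) := by
        have : (0:ℝ) < 1/(n+1) := by positivity
        linarith
      obtain ⟨x, hxA, hx⟩ := exists_lt_of_csInf_lt hne hpos
      refine le_trans (measure_mono fun s hs => ?_) (key x hxA)
      simp only [Set.mem_setOf_eq] at hs ⊢
      linarith
    rw [hset, hmono.measure_iUnion]
    exact ENNReal.toReal_le_of_le_ofReal hc0.le (iSup_le hle)
  · -- claim 2
    have hset : {s | β ≤ R s} = ⋂ n : ℕ, {s | β - 1/(n+1) < R s} := by
      ext s
      simp only [Set.mem_setOf_eq, Set.mem_iInter]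
      constructor
      · intro h n
        have : (0:ℝ) < 1/(n+1) := by positivity
        linarith
      · intro h
        by_contra hcon
        push_neg at hcon
        obtain ⟨n, hn⟩ := exists_nat_one_div_lt (sub_pos.mpr hcon)
        have := h n
        push_cast at hn
        linarith
    have hanti : Antitone (fun n : ℕ => {s | β - 1/(n+1) < R s}) := by
      intro n m hnm s hs
      simp only [Set.mem_setOf_eq] at hs ⊢
      have h1 : (1:ℝ)/(m+1) ≤ 1/(n+1) := by
        apply one_div_le_one_div_of_le (by positivity)
        exact_mod_cast by omega
      linarith
    have hge : ∀ n : ℕ, ENNReal.ofReal c ≤ μ {s | β - 1/(n+1) < R s} := by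
      intro n
      have hx : β - 1/(n+1) ∉ A := by
        intro hmem
        have := csInf_le hA2 hmem
        have hp : (0:ℝ) < 1/(n+1) := by positivity
        rw [← hβ] at this
        linarith
      rw [hA, Set.mem_setOf_eq, not_le] at hx
      calc ENNReal.ofReal c ≤ ENNReal.ofReal ((μ {s | β - 1/(n+1) < R s}).toReal) :=
            ENNReal.ofReal_le_ofReal hx.le
        _ = μ {s | β - 1/(n+1) < R s} := ENNReal.ofReal_toReal (measure_ne_top μ _)
    rw [hset]
    refine (ENNReal.ofReal_le_iff_le_toReal (measure_ne_top μ _)).mp ?_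
    rw [hanti.measure_iInter (fun n => (measurableSet_lt measurable_const hR).nullMeasurableSet) ⟨0, measure_ne_top μ _⟩]
    exact le_iInf hge

lemma upper_bound {S : Type*} [MeasurableSpace S] (μ : Measure S) [IsProbabilityMeasure μ]
    (R : S → ℝ) (hR : Measurable R) (Rmax : ℝ) (hbd : ∀ s, |R s| ≤ Rmax)
    (Rmin : ℝ) (hmin : essInf R μ = Rmin) (c : ℝ) (hc0 : 0 < c) (hc1 : c < 1)
    (δ : ℝ) (hδ : 0 < δ) :
    ∃ β : ℝ, ∃ W : S → ℝ, Measurable W ∧ (∀ s, 0 ≤ W s) ∧ (∫ s, W s ∂μ) = 1 ∧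
      (∫ s, |W s - 1| / 2 ∂μ) ≤ c ∧
      (∫ s, W s * R s ∂μ) ≤
        c * (Rmin + δ) + (1 - c) * (β - (1 / (1 - c)) * ∫ s, max 0 (β - R s) ∂μ) := by
  have h1c : (0:ℝ) < 1 - c := by linarith
  have hub : ∀ s, R s ≤ Rmax := fun s => (abs_le.mp (hbd s)).2
  have hlo : ∀ s, -Rmax ≤ R s := fun s => (abs_le.mp (hbd s)).1
  have hRint : Integrable R μ := integrable_of_bdd hR.aestronglyMeasurable Rmax hbd
  -- the low set E
  set E : Set S := {s | R s < Rmin + δ} with hEdef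
  have hE : MeasurableSet E := measurableSet_lt hR measurable_const
  have hEne : μ E ≠ 0 := by
    intro h0
    set G : Set ℝ := {a : ℝ | μ {x | R x < a} = 0} with hGdef
    have hGbdd : BddAbove G := by
      refine ⟨Rmax + 1, fun a ha => ?_⟩
      by_contra hcon
      push_neg at hcon
      have huniv : {x | R x < a} = (Set.univ : Set S) := by
        ext x; simp only [Set.mem_setOf_eq, Set.mem_univ, iff_true]
        exact lt_of_le_of_lt (hub x) (by linarith)
      rw [hGdef, Set.mem_setOf_eq, huniv, measure_univ] at ha
      exact one_ne_zero ha
    have hmem : Rmin + δ ∈ G := h0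
    have := le_csSup hGbdd hmem
    rw [← essInf_eq_sSup μ R, hmin] at this
    linarith
  set m : ℝ := (μ E).toReal with hmdef
  have hm : 0 < m := ENNReal.toReal_pos hEne (measure_ne_top μ _)
  -- quantile
  obtain ⟨β, hq1, hq2⟩ := exists_quantile μ R hR Rmax hbd c hc0 hc1
  set U : Set S := {s | β < R s} with hUdef
  have hU : MeasurableSet U := measurableSet_lt measurable_const hR
  set Q : Set S := {s | R s = β} with hQdef
  have hQ : MeasurableSet Q := hR (measurableSet_singleton β)
  set a : ℝ := (μ U).toReal with hadef
  set p : ℝ := (μ Q).toReal with hpdef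
  have hp0 : 0 ≤ p := ENNReal.toReal_nonneg
  have hba : (μ {s | β ≤ R s}).toReal = a + p := by
    have hsplit : {s | β ≤ R s} = U ∪ Q := by
      ext s
      simp only [hUdef, hQdef, Set.mem_setOf_eq, Set.mem_union]
      constructor
      · intro h; rcases lt_or_eq_of_le h with h | h
        · exact Or.inl h
        · exact Or.inr h.symm
      · rintro (h | h)
        · exact le_of_lt h
        · exact le_of_eq h.symm
    have hdisj : Disjoint U Q := by
      rw [Set.disjoint_left]
      intro s hsU hsQ
      rw [hUdef, Set.mem_setOf_eq] at hsU
      rw [hQdef, Set.mem_setOf_eq] at hsQ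
      exact absurd hsQ (ne_of_gt hsU)
    rw [hsplit, measure_union hdisj hQ, ENNReal.toReal_add (measure_ne_top μ _) (measure_ne_top μ _)]
  have hac : a ≤ c := hq1
  have hcb : c ≤ a + p := hba ▸ hq2
  set θ : ℝ := if p = 0 then 0 else (c - a) / p with hθdef
  have hθ0 : 0 ≤ θ := by
    rw [hθdef]; split_ifs with h
    · exact le_refl 0
    · exact div_nonneg (by linarith) hp0
  have hθ1 : θ ≤ 1 := by
    rw [hθdef]; split_ifs with h
    · norm_num
    · rw [div_le_one (lt_of_le_of_ne hp0 (Ne.symm h))]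
      linarith
  have hθc : a + θ * p = c := by
    rw [hθdef]; split_ifs with h
    · rw [h] at hcb; simp; linarith
    · field_simp; ring
  -- the function B
  set B : S → ℝ := fun s => U.indicator (fun _ => (1:ℝ)) s + θ * Q.indicator (fun _ => (1:ℝ)) s
    with hBdef
  have hBm : Measurable B :=
    ((measurable_const.indicator hU)).add ((measurable_const.indicator hQ).const_mul θ)
  have hB0 : ∀ s, 0 ≤ B s := by
    intro s
    have h1 : (0:ℝ) ≤ U.indicator (fun _ => (1:ℝ)) s := Set.indicator_nonneg (fun _ _ => zero_le_one) s
    have h2 : (0:ℝ) ≤ Q.indicator (fun _ => (1:ℝ)) s := Set.indicator_nonneg (fun _ _ => zero_le_one) s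
    rw [hBdef]
    positivity
  have hB1 : ∀ s, B s ≤ 1 := by
    intro s
    rw [hBdef]
    by_cases hsU : s ∈ U
    · have hsQ : s ∉ Q := by
        rw [hQdef, Set.mem_setOf_eq]
        rw [hUdef, Set.mem_setOf_eq] at hsU
        exact ne_of_gt hsU
      simp [Set.indicator_of_mem hsU, Set.indicator_of_notMem hsQ]
    · by_cases hsQ : s ∈ Q
      · simp [Set.indicator_of_notMem hsU, Set.indicator_of_mem hsQ, hθ1]
      · simp [Set.indicator_of_notMem hsU, Set.indicator_of_notMem hsQ]
  have hBint : Integrable B μ := integrable_of_bdd hBm.aestronglyMeasurable 1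
    (fun s => abs_le.mpr ⟨by linarith [hB0 s], hB1 s⟩)
  have hintB : ∫ s, B s ∂μ = c := by
    rw [hBdef]
    rw [integral_add ((integrable_const (1:ℝ)).indicator hU)
      (((integrable_const (1:ℝ)).indicator hQ).const_mul θ),
      integral_const_mul, integral_indicator_const (1:ℝ) hU, integral_indicator_const (1:ℝ) hQ]
    simp only [smul_eq_mul, mul_one, Measure.real]
    rw [← hadef, ← hpdef, mul_comm θ p] at *
    linarith [hθc]
  -- the function W
  set W : S → ℝ := fun s => (1 - B s) + (c/m) * E.indicator (fun _ => (1:ℝ)) s with hWdef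
  have hWm : Measurable W :=
    (measurable_const.sub hBm).add ((measurable_const.indicator hE).const_mul (c/m))
  have hcm0 : 0 ≤ c / m := div_nonneg hc0.le hm.le
  have hW0 : ∀ s, 0 ≤ W s := by
    intro s
    have h1 := hB1 s
    have h2 : (0:ℝ) ≤ E.indicator (fun _ => (1:ℝ)) s := Set.indicator_nonneg (fun _ _ => zero_le_one) s
    rw [hWdef]
    exact add_nonneg (by linarith) (mul_nonneg hcm0 h2)
  have hintE : ∫ s, E.indicator (fun _ => (1:ℝ)) s ∂μ = m := by
    rw [integral_indicator_const (1:ℝ) hE]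
    simp [hmdef, Measure.real]
  have hW1 : ∫ s, W s ∂μ = 1 := by
    rw [hWdef]
    have hint1 : Integrable (fun s => (1:ℝ) - B s) μ := (integrable_const (1:ℝ)).sub hBint
    have hint2 : Integrable (fun s => (c/m) * E.indicator (fun _ => (1:ℝ)) s) μ :=
      ((integrable_const (1:ℝ)).indicator hE).const_mul (c/m)
    rw [integral_add hint1 hint2, integral_const_mul, hintE,
      integral_sub (integrable_const (1:ℝ)) hBint, hintB]
    simp [div_mul_cancel₀ c hm.ne']
  have hWc : ∫ s, |W s - 1| / 2 ∂μ ≤ c := by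
    have hptw : ∀ s, |W s - 1| / 2 ≤ ((c/m) * E.indicator (fun _ => (1:ℝ)) s + B s) / 2 := by
      intro s
      have h2 : (0:ℝ) ≤ E.indicator (fun _ => (1:ℝ)) s := Set.indicator_nonneg (fun _ _ => zero_le_one) s
      have hw : W s - 1 = (c/m) * E.indicator (fun _ => (1:ℝ)) s - B s := by
        rw [hWdef]; ring
      rw [hw]
      have := abs_sub ((c/m) * E.indicator (fun _ => (1:ℝ)) s) (B s)
      have h3 : |(c/m) * E.indicator (fun _ => (1:ℝ)) s| = (c/m) * E.indicator (fun _ => (1:ℝ)) s :=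
        abs_of_nonneg (mul_nonneg hcm0 h2)
      have h4 : |B s| = B s := abs_of_nonneg (hB0 s)
      have h5 : |(c/m) * E.indicator (fun _ => (1:ℝ)) s - B s| ≤
          (c/m) * E.indicator (fun _ => (1:ℝ)) s + B s := by
        calc |(c/m) * E.indicator (fun _ => (1:ℝ)) s - B s|
            ≤ |(c/m) * E.indicator (fun _ => (1:ℝ)) s| + |B s| := abs_sub _ _
          _ = (c/m) * E.indicator (fun _ => (1:ℝ)) s + B s := by rw [h3, h4]
      linarith
    have hint2 : Integrable (fun s => (c/m) * E.indicator (fun _ => (1:ℝ)) s) μ :=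
      ((integrable_const (1:ℝ)).indicator hE).const_mul (c/m)
    have hintW1 : Integrable (fun s => W s - 1) μ := by
      have hWint : Integrable W μ :=
        ((integrable_const (1:ℝ)).sub hBint).add hint2
      exact hWint.sub (integrable_const 1)
    have hintabs : Integrable (fun s => |W s - 1| / 2) μ := hintW1.abs.div_const 2
    have hintrhs : Integrable (fun s => ((c/m) * E.indicator (fun _ => (1:ℝ)) s + B s) / 2) μ :=
      (hint2.add hBint).div_const 2
    calc ∫ s, |W s - 1| / 2 ∂μ
        ≤ ∫ s, ((c/m) * E.indicator (fun _ => (1:ℝ)) s + B s) / 2 ∂μ :=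
          integral_mono hintabs hintrhs hptw
      _ = c := by
          rw [integral_div, integral_add hint2 hBint, integral_const_mul, hintE, hintB,
            div_mul_cancel₀ c hm.ne']
          ring
  refine ⟨β, W, hWm, hW0, hW1, hWc, ?_⟩
  -- the value
  set I : ℝ := ∫ s, max 0 (β - R s) ∂μ with hIdef
  have hrw : (1 - c) * (β - (1 / (1 - c)) * I) = (1 - c) * β - I := by
    field_simp
  rw [hrw]
  have hmaxint : Integrable (fun s => max 0 (β - R s)) μ :=
    integrable_of_bdd ((measurable_const.max (measurable_const.sub hR)).aestronglyMeasurable)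
      (|β| + |Rmax|) (fun s => by
        rw [abs_of_nonneg (le_max_left _ _)]
        refine max_le (by positivity) ?_
        have h1 := abs_le.mp (hbd s)
        have h2 := le_abs_self β
        have h3 := le_abs_self Rmax
        linarith [h1.1])
  have hint1B : Integrable (fun s => (1:ℝ) - B s) μ := (integrable_const (1:ℝ)).sub hBint
  have hint1BR : Integrable (fun s => (1 - B s) * R s) μ :=
    integrable_mul_bdd hint1B hR.aestronglyMeasurable Rmax hbd
  have hintER : Integrable (fun s => E.indicator R s) μ := hRint.indicator hE
  -- decompose
  have hdecomp : ∫ s, W s * R s ∂μ =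
      ∫ s, (1 - B s) * R s ∂μ + (c/m) * ∫ s, E.indicator R s ∂μ := by
    have hptw : ∀ s, W s * R s = (1 - B s) * R s + (c/m) * E.indicator R s := by
      intro s
      rw [hWdef]
      by_cases hs : s ∈ E
      · simp only [Set.indicator_of_mem hs]
        ring
      · simp only [Set.indicator_of_notMem hs]
        ring
    rw [show (fun s => W s * R s) = fun s => (1 - B s) * R s + (c/m) * E.indicator R s from
      funext hptw, integral_add hint1BR (hintER.const_mul _), integral_const_mul]
  -- term 2 bound
  have hterm2 : (c/m) * ∫ s, E.indicator R s ∂μ ≤ c * (Rmin + δ) := by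
    have h1 : ∫ s, E.indicator R s ∂μ ≤ ∫ s, E.indicator (fun _ => Rmin + δ) s ∂μ := by
      refine integral_mono hintER ((integrable_const _).indicator hE) fun s => ?_
      by_cases hs : s ∈ E
      · simp only [Set.indicator_of_mem hs]
        exact le_of_lt hs
      · simp [Set.indicator_of_notMem hs]
    rw [integral_indicator_const _ hE] at h1
    have h2 : (c/m) * ∫ s, E.indicator R s ∂μ ≤ (c/m) * (m * (Rmin + δ)) := by
      apply mul_le_mul_of_nonneg_left _ hcm0
      calc ∫ s, E.indicator R s ∂μ ≤ (μ E).toReal • (Rmin + δ) := h1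
        _ = m * (Rmin + δ) := by rw [smul_eq_mul, hmdef]
    calc (c/m) * ∫ s, E.indicator R s ∂μ ≤ (c/m) * (m * (Rmin + δ)) := h2
      _ = c * (Rmin + δ) := by field_simp
  -- term 1 equality
  have hterm1 : ∫ s, (1 - B s) * R s ∂μ = (1 - c) * β - I := by
    have hptw : ∀ s, (1 - B s) * R s = (1 - B s) * β - max 0 (β - R s) := by
      intro s
      rw [hBdef]
      by_cases hsU : s ∈ U
      · have hβlt : β < R s := hsU
        have hsQ : s ∉ Q := ne_of_gt hβlt
        simp only [Set.indicator_of_mem hsU, Set.indicator_of_notMem hsQ]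
        rw [max_eq_left (by linarith)]
        ring
      · by_cases hsQ : s ∈ Q
        · have hRβ : R s = β := hsQ
          simp only [Set.indicator_of_notMem hsU, Set.indicator_of_mem hsQ]
          rw [hRβ]
          simp
        · have hlt : R s < β := by
            rw [hUdef, Set.mem_setOf_eq, not_lt] at hsU
            rcases lt_or_eq_of_le hsU with h | h
            · exact h
            · exact absurd h hsQ
          simp only [Set.indicator_of_notMem hsU, Set.indicator_of_notMem hsQ]
          rw [max_eq_right (by linarith)]
          ring
    rw [show (fun s => (1 - B s) * R s) = fun s => (1 - B s) * β - max 0 (β - R s) from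
      funext hptw, integral_sub (hint1B.mul_const β) hmaxint, integral_mul_const,
      integral_sub (integrable_const (1:ℝ)) hBint, hintB]
    simp [hIdef]
  rw [hdecomp, hterm1]
  linarith [hterm2]

lemma lower_bound {S : Type*} [MeasurableSpace S] (μ : Measure S) [IsProbabilityMeasure μ]
    (R : S → ℝ) (hR : Measurable R) (Rmax : ℝ) (hbd : ∀ s, |R s| ≤ Rmax)
    (Rmin : ℝ) (hae : ∀ᵐ s ∂μ, Rmin ≤ R s) (c : ℝ) (hc0 : 0 < c) (hc1 : c < 1)
    (W : S → ℝ) (hWm : Measurable W) (hW0 : ∀ s, 0 ≤ W s)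
    (hW1 : (∫ s, W s ∂μ) = 1) (hWc : (∫ s, |W s - 1| / 2 ∂μ) ≤ c) (β : ℝ) :
    c * Rmin + (1 - c) * (β - (1 / (1 - c)) * ∫ s, max 0 (β - R s) ∂μ) ≤ ∫ s, W s * R s ∂μ := by
  have h1c : (0:ℝ) < 1 - c := by linarith
  have hRint : Integrable R μ := integrable_of_bdd hR.aestronglyMeasurable Rmax hbd
  have hWint : Integrable W μ := by
    by_contra hcon
    rw [integral_undef hcon] at hW1
    norm_num at hW1
  set A : S → ℝ := fun s => max 0 (W s - 1) with hAdef
  set B : S → ℝ := fun s => max 0 (1 - W s) with hBdef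
  have hB0 : ∀ s, 0 ≤ B s := fun s => le_max_left _ _
  have hB1 : ∀ s, B s ≤ 1 := fun s => max_le (by norm_num) (by have := hW0 s; linarith)
  have hBm : Measurable B := measurable_const.max (measurable_const.sub hWm)
  have hBint : Integrable B μ := integrable_of_bdd hBm.aestronglyMeasurable 1
    (fun s => abs_le.mpr ⟨by linarith [hB0 s], hB1 s⟩)
  have hABeq : ∀ s, A s = W s - 1 + B s := by
    intro s
    rcases le_or_gt (W s) 1 with h | h
    · rw [hAdef, hBdef]
      simp only
      rw [max_eq_left (by linarith : W s - 1 ≤ 0), max_eq_right (by linarith : (0:ℝ) ≤ 1 - W s)]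
      ring
    · rw [hAdef, hBdef]
      simp only
      rw [max_eq_right (by linarith : (0:ℝ) ≤ W s - 1), max_eq_left (by linarith : 1 - W s ≤ 0)]
      ring
  have hAint : Integrable A μ := by
    rw [show A = fun s => W s - 1 + B s from funext hABeq]
    exact (hWint.sub (integrable_const 1)).add hBint
  have hA0 : ∀ s, 0 ≤ A s := fun s => le_max_left _ _
  have habs : ∀ s, |W s - 1| = A s + B s := by
    intro s
    rcases le_or_gt (W s) 1 with h | h
    · rw [abs_of_nonpos (by linarith : W s - 1 ≤ 0), hAdef, hBdef]
      simp only
      rw [max_eq_left (by linarith : W s - 1 ≤ 0), max_eq_right (by linarith : (0:ℝ) ≤ 1 - W s)]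
      ring
    · rw [abs_of_nonneg (by linarith : (0:ℝ) ≤ W s - 1), hAdef, hBdef]
      simp only
      rw [max_eq_right (by linarith : (0:ℝ) ≤ W s - 1), max_eq_left (by linarith : 1 - W s ≤ 0)]
      ring
  have hAB : ∫ s, A s ∂μ = ∫ s, B s ∂μ := by
    have h0 : ∫ s, (A s - B s) ∂μ = 0 := by
      rw [show (fun s => A s - B s) = fun s => W s - 1 from funext fun s => by linarith [hABeq s],
        integral_sub hWint (integrable_const 1), hW1]
      simp
    rw [integral_sub hAint hBint] at h0
    linarith
  set t : ℝ := ∫ s, B s ∂μ with htdef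
  have ht0 : 0 ≤ t := integral_nonneg hB0
  have htc : t ≤ c := by
    have heq : ∫ s, |W s - 1| / 2 ∂μ = t := by
      rw [show (fun s => |W s - 1| / 2) = fun s => (A s + B s) / 2 from funext fun s => by rw [habs s],
        integral_div, integral_add hAint hBint, hAB]
      ring
    linarith [heq ▸ hWc]
  have hWRint : Integrable (fun s => W s * R s) μ :=
    integrable_mul_bdd hWint hR.aestronglyMeasurable Rmax hbd
  have hARint : Integrable (fun s => A s * R s) μ :=
    integrable_mul_bdd hAint hR.aestronglyMeasurable Rmax hbd
  have hBRint : Integrable (fun s => B s * R s) μ :=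
    integrable_mul_bdd hBint hR.aestronglyMeasurable Rmax hbd
  have hmaxint : Integrable (fun s => max 0 (β - R s)) μ :=
    integrable_of_bdd ((measurable_const.max (measurable_const.sub hR)).aestronglyMeasurable)
      (|β| + |Rmax|) (fun s => by
        rw [abs_of_nonneg (le_max_left _ _)]
        refine max_le (by positivity) ?_
        have h1 := abs_le.mp (hbd s)
        have h2 := le_abs_self β
        have h3 := le_abs_self Rmax
        linarith [h1.1])
  set I : ℝ := ∫ s, max 0 (β - R s) ∂μ with hIdef
  have hI0 : 0 ≤ I := integral_nonneg (fun s => le_max_left _ _)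
  have hvmin : Rmin ≤ ∫ s, W s * R s ∂μ := by
    have h1 : ∫ s, W s * Rmin ∂μ ≤ ∫ s, W s * R s ∂μ := by
      refine integral_mono_ae (hWint.mul_const Rmin) hWRint ?_
      filter_upwards [hae] with s hs
      exact mul_le_mul_of_nonneg_left hs (hW0 s)
    rwa [integral_mul_const, hW1, one_mul] at h1
  have hrw : (1 - c) * (β - (1 / (1 - c)) * I) = (1 - c) * β - I := by
    field_simp
  rw [hrw]
  rcases le_or_gt β Rmin with hβ | hβ
  · nlinarith
  · -- main case
    have e1 : Rmin * t ≤ ∫ s, A s * R s ∂μ := by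
      have h1 : ∫ s, A s * Rmin ∂μ ≤ ∫ s, A s * R s ∂μ := by
        refine integral_mono_ae (hAint.mul_const Rmin) hARint ?_
        filter_upwards [hae] with s hs
        exact mul_le_mul_of_nonneg_left hs (hA0 s)
      rwa [integral_mul_const, hAB, mul_comm] at h1
    have e2 : (1 - t) * β - I ≤ ∫ s, (R s - B s * R s) ∂μ := by
      have hpt : ∀ s, (1 - B s) * β - max 0 (β - R s) ≤ R s - B s * R s := by
        intro s
        have hb0 := hB0 s; have hb1 := hB1 s
        rcases le_or_gt β (R s) with h | h
        · rw [max_eq_left (by linarith)]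
          nlinarith
        · rw [max_eq_right (by linarith)]
          nlinarith
      have hint0 : Integrable (fun s => (1:ℝ) - B s) μ := (integrable_const (1:ℝ)).sub hBint
      have hint1 : Integrable (fun s => (1 - B s) * β) μ := hint0.mul_const β
      have hintR : Integrable (fun s => R s - B s * R s) μ := hRint.sub hBRint
      have h1 : ∫ s, ((1 - B s) * β - max 0 (β - R s)) ∂μ ≤ ∫ s, (R s - B s * R s) ∂μ :=
        integral_mono (hint1.sub hmaxint) hintR hpt
      have h2 : ∫ s, ((1 - B s) * β - max 0 (β - R s)) ∂μ = (1 - t) * β - I := by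
        rw [integral_sub hint1 hmaxint, integral_mul_const, integral_sub (integrable_const 1) hBint]
        simp [htdef, hIdef]
      linarith [h2 ▸ h1]
    have hdecomp : ∫ s, W s * R s ∂μ = ∫ s, (R s - B s * R s) ∂μ + ∫ s, A s * R s ∂μ := by
      rw [show (fun s => W s * R s) = fun s => (R s - B s * R s) + A s * R s from funext fun s => by
        have h := hABeq s
        have hw : W s = 1 + A s - B s := by linarith
        rw [hw]; ring]
      exact integral_add (hRint.sub hBRint) hARint
    nlinarith [hdecomp, e1, e2]

theorem stmt1 {S : Type*} [MeasurableSpace S] (μ : Measure S) [IsProbabilityMeasure μ]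
    (R : S → ℝ) (hR : Measurable R) (Rmax : ℝ) (hbd : ∀ s, |R s| ≤ Rmax)
    (Rmin : ℝ) (hmin : essInf R μ = Rmin) (c : ℝ) (hc0 : 0 < c) (hc1 : c < 1) :
    sInf {v : ℝ | ∃ W : S → ℝ, Measurable W ∧ (∀ s, 0 ≤ W s) ∧
        (∫ s, W s ∂μ) = 1 ∧ (∫ s, |W s - 1| / 2 ∂μ) ≤ c ∧ v = ∫ s, W s * R s ∂μ} =
      c * Rmin + (1 - c) * (⨆ β : ℝ, (β - (1 / (1 - c)) * ∫ s, max 0 (β - R s) ∂μ)) := by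
  have h1c : (0:ℝ) < 1 - c := by linarith
  have hub : ∀ s, R s ≤ Rmax := fun s => (abs_le.mp (hbd s)).2
  have hlo : ∀ s, -Rmax ≤ R s := fun s => (abs_le.mp (hbd s)).1
  have hRint : Integrable R μ := integrable_of_bdd hR.aestronglyMeasurable Rmax hbd
  have hbord : Filter.IsBoundedUnder (· ≥ ·) (ae μ) R :=
    ⟨-Rmax, Filter.eventually_map.2 (ae_of_all μ hlo)⟩
  have hae : ∀ᵐ s ∂μ, Rmin ≤ R s := by
    have := ae_essInf_le (f := R) (μ := μ) hbord
    rw [hmin] at this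
    exact this
  set Sset : Set ℝ := {v : ℝ | ∃ W : S → ℝ, Measurable W ∧ (∀ s, 0 ≤ W s) ∧
      (∫ s, W s ∂μ) = 1 ∧ (∫ s, |W s - 1| / 2 ∂μ) ≤ c ∧ v = ∫ s, W s * R s ∂μ} with hSdef
  set g : ℝ → ℝ := fun β => β - (1 / (1 - c)) * ∫ s, max 0 (β - R s) ∂μ with hgdef
  -- g is bounded above by Rmax
  have hintR_le : ∫ s, R s ∂μ ≤ Rmax := by
    calc ∫ s, R s ∂μ ≤ ∫ _s, Rmax ∂μ := integral_mono hRint (integrable_const _) hub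
      _ = Rmax := by simp
  have hgRmax : ∀ β, g β ≤ Rmax := by
    intro β
    have hmaxint : Integrable (fun s => max 0 (β - R s)) μ :=
      integrable_of_bdd ((measurable_const.max (measurable_const.sub hR)).aestronglyMeasurable)
        (|β| + |Rmax|) (fun s => by
          rw [abs_of_nonneg (le_max_left _ _)]
          refine max_le (by positivity) ?_
          have h1 := abs_le.mp (hbd s)
          have h2 := le_abs_self β
          have h3 := le_abs_self Rmax
          linarith [h1.1])
    have hI0 : 0 ≤ ∫ s, max 0 (β - R s) ∂μ := integral_nonneg fun s => le_max_left _ _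
    have h1c' : (1:ℝ) ≤ 1 / (1 - c) := by
      rw [le_div_iff₀ h1c]; linarith
    rcases le_or_gt β Rmax with hβ | hβ
    · have : (1:ℝ) / (1 - c) * ∫ s, max 0 (β - R s) ∂μ ≥ 0 := by positivity
      rw [hgdef]
      simp only
      linarith
    · have hge : β - ∫ s, R s ∂μ ≤ ∫ s, max 0 (β - R s) ∂μ := by
        have h1 : ∫ s, (β - R s) ∂μ ≤ ∫ s, max 0 (β - R s) ∂μ :=
          integral_mono ((integrable_const β).sub hRint) hmaxint fun s => le_max_right _ _
        rwa [integral_sub (integrable_const β) hRint, integral_const, Measure.real, measure_univ,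
          ENNReal.toReal_one, one_smul] at h1
      have hstep : ∫ s, max 0 (β - R s) ∂μ ≤ (1 / (1 - c)) * ∫ s, max 0 (β - R s) ∂μ :=
        le_mul_of_one_le_left hI0 h1c'
      rw [hgdef]
      simp only
      linarith
  have hbddg : BddAbove (Set.range g) := ⟨Rmax, by rintro _ ⟨β, rfl⟩; exact hgRmax β⟩
  -- nonemptiness of Sset
  have hSne : Sset.Nonempty := by
    refine ⟨∫ s, R s ∂μ, fun _ => 1, measurable_const, fun _ => zero_le_one, by simp, by simp [hc0.le], by simp⟩
  -- lower bound
  have hkey : ∀ v ∈ Sset, c * Rmin + (1 - c) * (⨆ β, g β) ≤ v := by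
    rintro v ⟨W, hWm, hW0, hW1, hWc, rfl⟩
    have hall : ∀ β, g β ≤ ((∫ s, W s * R s ∂μ) - c * Rmin) / (1 - c) := by
      intro β
      have := lower_bound μ R hR Rmax hbd Rmin hae c hc0 hc1 W hWm hW0 hW1 hWc β
      rw [le_div_iff₀ h1c]
      rw [hgdef]
      simp only
      nlinarith [this]
    have hsup := ciSup_le hall
    rw [le_div_iff₀ h1c] at hsup
    nlinarith [hsup]
  have hSbdd : BddBelow Sset := ⟨c * Rmin + (1 - c) * (⨆ β, g β), fun v hv => hkey v hv⟩
  refine le_antisymm ?_ (le_csInf hSne hkey)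
  -- upper bound
  refine le_of_forall_pos_le_add fun ε hε => ?_
  obtain ⟨β, W, hWm, hW0, hW1, hWc, hval⟩ :=
    upper_bound μ R hR Rmax hbd Rmin hmin c hc0 hc1 (ε / c) (by positivity)
  have hmem : (∫ s, W s * R s ∂μ) ∈ Sset := ⟨W, hWm, hW0, hW1, hWc, rfl⟩
  have hle : (∫ s, W s * R s ∂μ) ≤ c * Rmin + (1 - c) * (⨆ β', g β') + ε := by
    have h1 : g β ≤ ⨆ β', g β' := le_ciSup hbddg β
    have h2 : c * (Rmin + ε / c) = c * Rmin + ε := by field_simp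
    have h3 : (1 - c) * g β ≤ (1 - c) * (⨆ β', g β') :=
      mul_le_mul_of_nonneg_left h1 h1c.le
    calc (∫ s, W s * R s ∂μ)
        ≤ c * (Rmin + ε / c) + (1 - c) * g β := hval
      _ ≤ c * Rmin + ε + (1 - c) * (⨆ β', g β') := by rw [h2] at *; linarith
      _ = c * Rmin + (1 - c) * (⨆ β', g β') + ε := by ring
  exact le_trans (csInf_le hSbdd hmem) hle
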